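/- Let n ≥ 1 be an integer and a ∈ ℝ. Define G : ℝ^{n+1} \ {0} → ℝ by G(X) = |X|^{−(n−1+a)}, where X = (x,y) ∈ ℝⁿ × ℝ and |X| = (|x|² + y²)^{1/2}. Then at every point X = (x,y) with X ≠ 0 and y ≠ 0 one has ΔG(X) + (a/y) ∂_y G(X) = 0; equivalently, the vector field X ↦ |y|^a ∇G(X) has vanishing divergence at every such point. -/

import Mathlib

open scoped RealInnerProductSpace

noncomputable section Statement9Aux

variable {n : ℕ}

def Lmap (p : EuclideanSpace ℝ (Fin n) × ℝ) : (EuclideanSpace ℝ (Fin n) × ℝ) →L[ℝ] ℝ :=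
  (((2 : ℝ) • (innerSL ℝ p.1)).comp (ContinuousLinearMap.fst ℝ (EuclideanSpace ℝ (Fin n)) ℝ)) +
    (2 * p.2) • (ContinuousLinearMap.snd ℝ (EuclideanSpace ℝ (Fin n)) ℝ)

lemma Lmap_apply (p v : EuclideanSpace ℝ (Fin n) × ℝ) :
    Lmap p v = 2 * ⟪p.1, v.1⟫ + 2 * p.2 * v.2 := by
  simp [Lmap]

lemma Lmap_symm (p v : EuclideanSpace ℝ (Fin n) × ℝ) : Lmap p v = Lmap v p := by
  simp only [Lmap_apply, real_inner_comm]; ring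

lemma hasFDerivAt_N (p : EuclideanSpace ℝ (Fin n) × ℝ) :
    HasFDerivAt (fun q : EuclideanSpace ℝ (Fin n) × ℝ => ‖q.1‖ ^ 2 + q.2 ^ 2) (Lmap p) p := by
  have hfun : (fun q : EuclideanSpace ℝ (Fin n) × ℝ => ‖q.1‖ ^ 2 + q.2 ^ 2)
      = fun q : EuclideanSpace ℝ (Fin n) × ℝ => ⟪q.1, q.1⟫ + q.2 * q.2 := by
    funext q; rw [real_inner_self_eq_norm_sq]; ring
  rw [hfun]
  have h1 := (hasFDerivAt_fst (𝕜 := ℝ) (p := p)).inner ℝ (hasFDerivAt_fst (𝕜 := ℝ) (p := p))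
  have h2 := (hasFDerivAt_snd (𝕜 := ℝ) (p := p)).mul (hasFDerivAt_snd (𝕜 := ℝ) (p := p))
  have h : HasFDerivAt (fun q : EuclideanSpace ℝ (Fin n) × ℝ => ⟪q.1, q.1⟫ + q.2 * q.2) _ p :=
    h1.add h2
  refine h.congr_fderiv ?_
  refine ContinuousLinearMap.ext fun v => ?_
  simp [Lmap, fderivInnerCLM_apply, real_inner_comm]
  simp only [mul_comm]
  ring


lemma hasFDerivAt_G (c : ℝ) {p : EuclideanSpace ℝ (Fin n) × ℝ}
    (hp : ‖p.1‖ ^ 2 + p.2 ^ 2 ≠ 0) :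
    HasFDerivAt (fun q : EuclideanSpace ℝ (Fin n) × ℝ => (‖q.1‖ ^ 2 + q.2 ^ 2) ^ c)
      ((c * (‖p.1‖ ^ 2 + p.2 ^ 2) ^ (c - 1)) • Lmap p) p :=
  (hasFDerivAt_N p).rpow_const (Or.inl hp)

lemma fderiv_G_apply (c : ℝ) {q : EuclideanSpace ℝ (Fin n) × ℝ}
    (hq : ‖q.1‖ ^ 2 + q.2 ^ 2 ≠ 0) (v : EuclideanSpace ℝ (Fin n) × ℝ) :
    fderiv ℝ (fun r : EuclideanSpace ℝ (Fin n) × ℝ => (‖r.1‖ ^ 2 + r.2 ^ 2) ^ c) q v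
      = c * (‖q.1‖ ^ 2 + q.2 ^ 2) ^ (c - 1) * (Lmap v q) := by
  rw [(hasFDerivAt_G c hq).fderiv]
  simp only [ContinuousLinearMap.coe_smul', Pi.smul_apply, smul_eq_mul]
  rw [Lmap_symm q v]

lemma second_deriv (c : ℝ) {p : EuclideanSpace ℝ (Fin n) × ℝ}
    (hp : ‖p.1‖ ^ 2 + p.2 ^ 2 ≠ 0) (v : EuclideanSpace ℝ (Fin n) × ℝ) :
    fderiv ℝ (fun q : EuclideanSpace ℝ (Fin n) × ℝ =>
        fderiv ℝ (fun r : EuclideanSpace ℝ (Fin n) × ℝ => (‖r.1‖ ^ 2 + r.2 ^ 2) ^ c) q v) p v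
      = c * (‖p.1‖ ^ 2 + p.2 ^ 2) ^ (c - 1) * (2 * ‖v.1‖ ^ 2 + 2 * v.2 ^ 2)
        + (Lmap p v) * (c * ((c - 1) * (‖p.1‖ ^ 2 + p.2 ^ 2) ^ (c - 2)) * (Lmap p v)) := by
  have hcont : Continuous fun q : EuclideanSpace ℝ (Fin n) × ℝ => ‖q.1‖ ^ 2 + q.2 ^ 2 := by
    fun_prop
  have hU : IsOpen {q : EuclideanSpace ℝ (Fin n) × ℝ | ‖q.1‖ ^ 2 + q.2 ^ 2 ≠ 0} :=
    isOpen_compl_singleton.preimage hcont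
  have hev : (fun q : EuclideanSpace ℝ (Fin n) × ℝ =>
      fderiv ℝ (fun r : EuclideanSpace ℝ (Fin n) × ℝ => (‖r.1‖ ^ 2 + r.2 ^ 2) ^ c) q v)
      =ᶠ[nhds p] fun q => c * (‖q.1‖ ^ 2 + q.2 ^ 2) ^ (c - 1) * (Lmap v q) := by
    filter_upwards [hU.mem_nhds hp] with q hq
    exact fderiv_G_apply c hq v
  rw [hev.fderiv_eq]
  have h1 : HasFDerivAt (fun q : EuclideanSpace ℝ (Fin n) × ℝ =>
      c * (‖q.1‖ ^ 2 + q.2 ^ 2) ^ (c - 1))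
      (c • (((c - 1) * (‖p.1‖ ^ 2 + p.2 ^ 2) ^ (c - 1 - 1)) • Lmap p)) p :=
    ((hasFDerivAt_N p).rpow_const (Or.inl hp)).const_mul c
  have h2 : HasFDerivAt (fun q : EuclideanSpace ℝ (Fin n) × ℝ => Lmap v q) (Lmap v) p :=
    (Lmap v).hasFDerivAt
  have h3 : HasFDerivAt (fun q : EuclideanSpace ℝ (Fin n) × ℝ =>
      c * (‖q.1‖ ^ 2 + q.2 ^ 2) ^ (c - 1) * Lmap v q) _ p := h1.mul h2
  rw [h3.fderiv]
  have e : c - 1 - 1 = c - 2 := by ring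
  rw [e, Lmap_symm v p]
  have hvv : Lmap v v = 2 * ‖v.1‖ ^ 2 + 2 * v.2 ^ 2 := by
    rw [Lmap_apply, real_inner_self_eq_norm_sq]; ring
  simp only [ContinuousLinearMap.add_apply, ContinuousLinearMap.coe_smul', Pi.smul_apply,
    smul_eq_mul, hvv]
  ring

end Statement9Aux

/-- Let `n ≥ 1` and `a : ℝ`. Define `G : ℝ^{n+1} \ {0} → ℝ` by `G(X) = |X|^{−(n−1+a)}`
with `X = (x,y)` and `|X| = (|x|² + y²)^{1/2}`. Then at every `X = (x,y)` with `X ≠ 0`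
and `y ≠ 0` one has `ΔG(X) + (a/y) ∂_y G(X) = 0`. Here the Laplacian is
`ΔG = Σᵢ ∂_{x_i}∂_{x_i} G + ∂_y ∂_y G`, with partial derivatives expressed through
`fderiv`. -/
theorem statement9 (n : ℕ) (hn : 1 ≤ n) (a : ℝ) :
    ∀ (x : EuclideanSpace ℝ (Fin n)) (y : ℝ),
      (x, y) ≠ ((0 : EuclideanSpace ℝ (Fin n)), (0 : ℝ)) → y ≠ 0 →
      (∑ i : Fin n,
          fderiv ℝ
            (fun q : EuclideanSpace ℝ (Fin n) × ℝ =>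
              fderiv ℝ
                (fun p : EuclideanSpace ℝ (Fin n) × ℝ =>
                  Real.sqrt (‖p.1‖ ^ 2 + p.2 ^ 2) ^ (-((n : ℝ) - 1 + a))) q
                ((EuclideanSpace.single i (1 : ℝ)), (0 : ℝ))) (x, y)
            ((EuclideanSpace.single i (1 : ℝ)), (0 : ℝ)))
        + fderiv ℝ
            (fun q : EuclideanSpace ℝ (Fin n) × ℝ =>
              fderiv ℝ
                (fun p : EuclideanSpace ℝ (Fin n) × ℝ =>
                  Real.sqrt (‖p.1‖ ^ 2 + p.2 ^ 2) ^ (-((n : ℝ) - 1 + a))) q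
                ((0 : EuclideanSpace ℝ (Fin n)), (1 : ℝ))) (x, y)
            ((0 : EuclideanSpace ℝ (Fin n)), (1 : ℝ))
        + (a / y) *
            fderiv ℝ
              (fun p : EuclideanSpace ℝ (Fin n) × ℝ =>
                Real.sqrt (‖p.1‖ ^ 2 + p.2 ^ 2) ^ (-((n : ℝ) - 1 + a))) (x, y)
              ((0 : EuclideanSpace ℝ (Fin n)), (1 : ℝ))
      = 0 := by
  intro x y hxy hy
  set c : ℝ := -((n : ℝ) - 1 + a) / 2 with hc
  have hGfun : (fun p : EuclideanSpace ℝ (Fin n) × ℝ =>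
      Real.sqrt (‖p.1‖ ^ 2 + p.2 ^ 2) ^ (-((n : ℝ) - 1 + a)))
      = fun p : EuclideanSpace ℝ (Fin n) × ℝ => (‖p.1‖ ^ 2 + p.2 ^ 2) ^ c := by
    funext p
    rw [hc, ← Real.rpow_div_two_eq_sqrt _ (by positivity)]
  have hp : ‖((x, y) : EuclideanSpace ℝ (Fin n) × ℝ).1‖ ^ 2
      + ((x, y) : EuclideanSpace ℝ (Fin n) × ℝ).2 ^ 2 ≠ 0 := by
    have : (0 : ℝ) < ‖x‖ ^ 2 + y ^ 2 := by positivity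
    simpa using this.ne'
  simp only [hGfun]
  rw [Finset.sum_congr rfl fun i _ => second_deriv c hp (EuclideanSpace.single i 1, 0),
    second_deriv c hp ((0 : EuclideanSpace ℝ (Fin n)), 1),
    fderiv_G_apply c hp ((0 : EuclideanSpace ℝ (Fin n)), 1)]
  simp only [Lmap_apply, EuclideanSpace.inner_single_right, EuclideanSpace.norm_single,
    inner_zero_right, inner_zero_left, norm_zero, map_one, conj_trivial, one_pow, mul_one,
    mul_zero, zero_mul, add_zero, zero_add, norm_one]
  have hN : (‖x‖ ^ 2 + y ^ 2 : ℝ) ≠ 0 := by simpa using hp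
  have hxsum : ∑ i : Fin n, x i ^ 2 = ‖x‖ ^ 2 := by
    rw [EuclideanSpace.norm_eq, Real.sq_sqrt (by positivity)]
    simp [sq_abs]
  have hterm : ∀ i : Fin n,
      (c * (‖x‖ ^ 2 + y ^ 2) ^ (c - 1) * (2 + 2 * (0 : ℝ) ^ 2) +
        2 * (1 * x i) * (c * ((c - 1) * (‖x‖ ^ 2 + y ^ 2) ^ (c - 2)) * (2 * (1 * x i))))
      = 2 * c * (‖x‖ ^ 2 + y ^ 2) ^ (c - 1)
        + 4 * c * (c - 1) * (‖x‖ ^ 2 + y ^ 2) ^ (c - 2) * x i ^ 2 := by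
    intro i; ring
  rw [Finset.sum_congr rfl fun i _ => hterm i, Finset.sum_add_distrib, Finset.sum_const,
    Finset.card_univ, Fintype.card_fin, ← Finset.mul_sum, hxsum]
  have hpow : (‖x‖ ^ 2 + y ^ 2 : ℝ) ^ (c - 1)
      = (‖x‖ ^ 2 + y ^ 2 : ℝ) ^ (c - 2) * (‖x‖ ^ 2 + y ^ 2) := by
    rw [show c - 1 = c - 2 + 1 by ring, Real.rpow_add_one hN]
  rw [hpow]
  field_simp
  rw [hc]
  ring
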